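/- Let (A, d) be a metric space with binary operations +_r for r ∈ [0,1] forming a Wasserstein barycentric algebra of order p ≥ 1. Then for all n ≥ 1, all r_1, …, r_n ∈ [0,1] with r_1 + ⋯ + r_n = 1, and all x_1, …, x_n, x'_1, …, x'_n ∈ A, the finite convex combinations satisfy d(∑_{i=1}^n r_i x_i, ∑_{i=1}^n r_i x'_i)^p ≤ ∑_{i=1}^n r_i · d(x_i, x'_i)^p. -/

import Mathlib

open scoped ENNReal

noncomputable section

/-- A Wasserstein barycentric algebra of order `p`: a metric space with binary
convex-combination operations `+_r` for `r ∈ [0,1]` satisfying the barycentric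
laws (B1), (B2), (SC), (SA) and the Wasserstein condition
`d(x +_r y, x' +_r y')^p ≤ r·d(x,x')^p + (1−r)·d(y,y')^p`. -/
structure WassersteinAlgebra (p : ℝ) (A : Type*) [MetricSpace A] where
  comb : ℝ → A → A → A
  b1 : ∀ x y : A, comb 1 x y = x
  b2 : ∀ r ∈ Set.Icc (0 : ℝ) 1, ∀ x : A, comb r x x = x
  sc : ∀ r ∈ Set.Icc (0 : ℝ) 1, ∀ x y : A, comb r x y = comb (1 - r) y x
  sa : ∀ q ∈ Set.Icc (0 : ℝ) 1, ∀ r ∈ Set.Icc (0 : ℝ) 1, q < 1 → r < 1 →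
    ∀ x y z : A,
      comb r (comb q x y) z = comb (q * r) x (comb ((r - q * r) / (1 - q * r)) y z)
  wass : ∀ r ∈ Set.Icc (0 : ℝ) 1, ∀ x x' y y' : A,
    dist (comb r x y) (comb r x' y') ^ p ≤ r * dist x x' ^ p + (1 - r) * dist y y' ^ p

/-- The finite convex sum `∑ rᵢ xᵢ` in a barycentric algebra, defined
inductively: `∑_{i=1}^n rᵢ xᵢ = x₁ +_{r₁} ∑_{i=2}^n (rᵢ/(1−r₁)) xᵢ`
(here the weight of the head is its weight relative to the total remaining
mass, which for weights summing to `1` agrees with the displayed formula). -/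
def WassersteinAlgebra.convSum {p : ℝ} {A : Type*} [MetricSpace A]
    (W : WassersteinAlgebra p A) : ℝ × A → List (ℝ × A) → A
  | (_, x), [] => x
  | (r, x), t :: l =>
      W.comb (r / (r + t.1 + (l.map Prod.fst).sum)) x (W.convSum t l)

lemma convSum_aux {p : ℝ} {A : Type*} [MetricSpace A]
    (W : WassersteinAlgebra p A) (tl : List (ℝ × A × A)) :
    ∀ (hd : ℝ × A × A),
    (∀ e ∈ hd :: tl, 0 ≤ e.1) →
    0 < ((hd :: tl).map Prod.fst).sum →
    dist (W.convSum (hd.1, hd.2.1) (tl.map fun e => (e.1, e.2.1)))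
        (W.convSum (hd.1, hd.2.2) (tl.map fun e => (e.1, e.2.2))) ^ p
      ≤ (((hd :: tl).map fun e => e.1 * dist e.2.1 e.2.2 ^ p).sum)
        / ((hd :: tl).map Prod.fst).sum := by
  induction tl with
  | nil =>
      intro hd hnn hpos
      simp only [List.map_nil, List.map_cons, List.sum_cons, List.sum_nil, add_zero] at *
      simp only [WassersteinAlgebra.convSum]
      rw [mul_div_cancel_left₀ _ (ne_of_gt hpos)]
  | cons t l ih =>
      intro hd hnn hpos
      have hr0 : 0 ≤ hd.1 := hnn hd (by simp)
      have ht0 : 0 ≤ t.1 := hnn t (by simp)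
      have hl0 : 0 ≤ (l.map Prod.fst).sum := by
        apply List.sum_nonneg
        intro x hx
        obtain ⟨e, he, rfl⟩ := List.mem_map.mp hx
        exact hnn e (by simp [he])
      set s' : ℝ := t.1 + (l.map Prod.fst).sum with hs'
      have hs'0 : 0 ≤ s' := add_nonneg ht0 hl0
      set s : ℝ := hd.1 + s' with hsdef
      have hspos : 0 < s := by
        simpa [s, s', add_assoc] using hpos
      have hunfold1 : W.convSum (hd.1, hd.2.1) ((t :: l).map fun e => (e.1, e.2.1))
          = W.comb (hd.1 / s) hd.2.1
              (W.convSum (t.1, t.2.1) (l.map fun e => (e.1, e.2.1))) := by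
        simp [WassersteinAlgebra.convSum, List.map_map, Function.comp_def, s, s', add_assoc]
      have hunfold2 : W.convSum (hd.1, hd.2.2) ((t :: l).map fun e => (e.1, e.2.2))
          = W.comb (hd.1 / s) hd.2.2
              (W.convSum (t.1, t.2.2) (l.map fun e => (e.1, e.2.2))) := by
        simp [WassersteinAlgebra.convSum, List.map_map, Function.comp_def, s, s', add_assoc]
      rw [hunfold1, hunfold2]
      have hsum_eq : ((hd :: t :: l).map Prod.fst).sum = s := by
        simp [s, s', add_assoc]
      rw [hsum_eq]
      have hrestnn : 0 ≤ ((t :: l).map fun e => e.1 * dist e.2.1 e.2.2 ^ p).sum := by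
        apply List.sum_nonneg
        intro x hx
        obtain ⟨e, he, rfl⟩ := List.mem_map.mp hx
        exact mul_nonneg (hnn e (by simp [he])) (Real.rpow_nonneg dist_nonneg _)
      rcases eq_or_lt_of_le hs'0 with hz | hs'pos
      · -- s' = 0, so hd.1 = s and weight is 1
        have hds : hd.1 = s := by simp [s, ← hz]
        have hw1 : hd.1 / s = 1 := by rw [hds]; exact div_self (ne_of_gt hspos)
        rw [hw1, W.b1, W.b1]
        simp only [List.map_cons, List.sum_cons]
        rw [hds, le_div_iff₀ hspos]
        simp only [List.map_cons, List.sum_cons] at hrestnn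
        linarith
      · -- s' > 0
        have hwmem : hd.1 / s ∈ Set.Icc (0 : ℝ) 1 := by
          constructor
          · exact div_nonneg hr0 (le_of_lt hspos)
          · rw [div_le_one hspos]; simp only [s]; linarith
        have hw := W.wass (hd.1 / s) hwmem hd.2.1 hd.2.2
          (W.convSum (t.1, t.2.1) (l.map fun e => (e.1, e.2.1)))
          (W.convSum (t.1, t.2.2) (l.map fun e => (e.1, e.2.2)))
        have hih := ih t (fun e he => hnn e (List.mem_cons_of_mem hd he))
          (by simpa [s', add_assoc] using hs'pos)
        have hsum' : ((t :: l).map Prod.fst).sum = s' := by simp [s', add_assoc]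
        rw [hsum'] at hih
        have h1r : 1 - hd.1 / s = s' / s := by
          field_simp
          simp [s]
        calc dist (W.comb (hd.1 / s) hd.2.1 (W.convSum (t.1, t.2.1) (l.map fun e => (e.1, e.2.1))))
              (W.comb (hd.1 / s) hd.2.2 (W.convSum (t.1, t.2.2) (l.map fun e => (e.1, e.2.2)))) ^ p
            ≤ hd.1 / s * dist hd.2.1 hd.2.2 ^ p
              + (1 - hd.1 / s) * dist (W.convSum (t.1, t.2.1) (l.map fun e => (e.1, e.2.1)))
                  (W.convSum (t.1, t.2.2) (l.map fun e => (e.1, e.2.2))) ^ p := hw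
          _ ≤ hd.1 / s * dist hd.2.1 hd.2.2 ^ p
              + (s' / s) * (((t :: l).map fun e => e.1 * dist e.2.1 e.2.2 ^ p).sum / s') := by
              rw [h1r]
              gcongr
          _ = ((hd :: t :: l).map fun e => e.1 * dist e.2.1 e.2.2 ^ p).sum / s := by
              simp only [List.map_cons, List.sum_cons]
              field_simp

/-- The Wasserstein condition extends to finite convex combinations: for
weights `r₁, …, rₙ ∈ [0,1]` summing to `1`,
`d(∑ rᵢ xᵢ, ∑ rᵢ x'ᵢ)^p ≤ ∑ rᵢ · d(xᵢ, x'ᵢ)^p`. -/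
theorem wassersteinAlgebra_convSum_estimate
    {p : ℝ} {A : Type*} [MetricSpace A] (hp : 1 ≤ p)
    (W : WassersteinAlgebra p A)
    (hd : ℝ × A × A) (tl : List (ℝ × A × A))
    (hw : ∀ e ∈ hd :: tl, e.1 ∈ Set.Icc (0 : ℝ) 1)
    (hsum : ((hd :: tl).map Prod.fst).sum = 1) :
    dist (W.convSum (hd.1, hd.2.1) (tl.map fun e => (e.1, e.2.1)))
        (W.convSum (hd.1, hd.2.2) (tl.map fun e => (e.1, e.2.2))) ^ p
      ≤ ((hd :: tl).map fun e => e.1 * dist e.2.1 e.2.2 ^ p).sum := by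
  have := convSum_aux W tl hd (fun e he => (hw e he).1) (by rw [hsum]; norm_num)
  rwa [hsum, div_one] at this
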